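/- Let G be a finite group, H a normal subgroup of G of index 2, and ℓ an odd prime. Then a subgroup R of G is an ℓ-radical subgroup of G if and only if R is contained in H and R is an ℓ-radical subgroup of H; in particular the set of ℓ-radical subgroups of G coincides with the set of ℓ-radical subgroups of H. -/

import Mathlib

/-- The `ℓ`-core `O_ℓ(G)` of a finite group `G`: the largest normal `ℓ`-subgroup of `G`,
realized as the join of all normal `ℓ`-subgroups. -/
def pCore (ℓ : ℕ) (G : Type) [Group G] : Subgroup G :=
  sSup {N : Subgroup G | N.Normal ∧ IsPGroup ℓ ↥N}

/-- The `ℓ`-core of a subgroup `H` of `G`, viewed again as a subgroup of `G`. -/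
def pCoreOf (ℓ : ℕ) {G : Type} [Group G] (H : Subgroup G) : Subgroup G :=
  Subgroup.map H.subtype (pCore ℓ ↥H)

/-- A subgroup `R` of `G` is `ℓ`-radical if `R = O_ℓ(N_G(R))`. -/
def IsRadicalSubgroup (ℓ : ℕ) {G : Type} [Group G] (R : Subgroup G) : Prop :=
  R = pCoreOf ℓ (Subgroup.normalizer (R : Set G))

section Aux

variable {ℓ : ℕ} {G : Type} [Group G]

open scoped Pointwise

lemma le_pCore {N : Subgroup G} (h1 : N.Normal) (h2 : IsPGroup ℓ N) : N ≤ pCore ℓ G :=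
  le_sSup ⟨h1, h2⟩

lemma map_pCore {G' : Type} [Group G'] (e : G ≃* G') :
    (pCore ℓ G).map e.toMonoidHom = pCore ℓ G' := by
  apply le_antisymm
  · rw [Subgroup.map_le_iff_le_comap]
    apply sSup_le
    rintro N ⟨hN, hNp⟩
    rw [← Subgroup.map_le_iff_le_comap]
    exact le_pCore (hN.map _ e.surjective) (hNp.map _)
  · apply sSup_le
    rintro N' ⟨hN', hN'p⟩
    have h1 : N'.map e.symm.toMonoidHom ≤ pCore ℓ G :=
      le_pCore (hN'.map _ e.symm.surjective) (hN'p.map _)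
    have h2 := Subgroup.map_mono (f := e.toMonoidHom) h1
    have h3 : (N'.map e.symm.toMonoidHom).map e.toMonoidHom = N' := by
      ext y
      constructor
      · rintro ⟨x, ⟨z, hz, rfl⟩, rfl⟩
        simpa using hz
      · intro hy
        exact ⟨e.symm y, ⟨y, hy, rfl⟩, by simp⟩
    rwa [h3] at h2

lemma pCore_normal : (pCore ℓ G).Normal := by
  constructor
  intro n hn g
  have h := map_pCore (ℓ := ℓ) (MulAut.conj g)
  rw [← h]
  exact ⟨n, hn, rfl⟩

lemma pCore_isPGroup [Finite G] (hℓ : ℓ.Prime) : IsPGroup ℓ (pCore ℓ G) := by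
  haveI : Fact ℓ.Prime := ⟨hℓ⟩
  haveI : Finite (Sylow ℓ G) :=
    Finite.of_injective (fun P => (P : Subgroup G)) (fun _ _ h => Sylow.ext h)
  obtain ⟨P⟩ : Nonempty (Sylow ℓ G) := inferInstance
  have hle : pCore ℓ G ≤ P := by
    apply sSup_le
    rintro N ⟨hN, hNp⟩
    obtain ⟨Q, hQ⟩ := hNp.exists_le_sylow
    obtain ⟨g, rfl⟩ := MulAction.exists_smul_eq G Q P
    calc N = MulAut.conj g • N := (Subgroup.Normal.conj_smul_eq_self (h := hN) g N).symm
      _ ≤ MulAut.conj g • (Q : Subgroup G) :=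
        (Subgroup.pointwise_smul_le_pointwise_smul_iff).mpr hQ
      _ = ↑(g • Q) := (Sylow.coe_subgroup_smul).symm
  exact P.2.to_le hle

lemma pgroup_le_of_index {K P : Subgroup G} (hK : K.Normal) (hidx : K.index ∣ 2)
    (hodd : Odd ℓ) (hP : IsPGroup ℓ P) : P ≤ K := by
  haveI := hK
  intro x hx
  obtain ⟨n, hn⟩ := hP ⟨x, hx⟩
  have hxn : x ^ ℓ ^ n = 1 := by
    have h0 := congrArg Subtype.val hn
    simpa using h0
  have h1 : orderOf ((QuotientGroup.mk' K) x) ∣ ℓ ^ n :=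
    orderOf_dvd_of_pow_eq_one (by rw [← map_pow, hxn, map_one])
  have h2 : orderOf ((QuotientGroup.mk' K) x) ∣ 2 := by
    refine dvd_trans ?_ hidx
    rw [Subgroup.index_eq_card]
    exact orderOf_dvd_natCard _
  have hcop : Nat.Coprime (ℓ ^ n) 2 := (hodd.pow).coprime_two_right
  have h3 : orderOf ((QuotientGroup.mk' K) x) = 1 :=
    Nat.eq_one_of_dvd_coprimes hcop h1 h2
  exact (QuotientGroup.eq_one_iff x).mp (orderOf_eq_one_iff.mp h3)

lemma isPGroup_subgroupOf {P K : Subgroup G} (hP : IsPGroup ℓ P) :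
    IsPGroup ℓ (P.subgroupOf K) := by
  intro g
  obtain ⟨n, hn⟩ := hP ⟨(g : K), g.2⟩
  refine ⟨n, ?_⟩
  have h1 : ((g : K) : G) ^ ℓ ^ n = 1 := by
    have h0 := congrArg Subtype.val hn
    simpa using h0
  apply Subtype.ext
  apply Subtype.ext
  push_cast
  exact h1

lemma pCoreOf_le (K : Subgroup G) : pCoreOf ℓ K ≤ K :=
  Subgroup.map_subtype_le _

lemma le_normalizer_pCoreOf (K : Subgroup G) : K ≤ Subgroup.normalizer ((pCoreOf ℓ K : Subgroup G) : Set G) := by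
  have key : ∀ g ∈ K, ∀ x ∈ pCoreOf ℓ K, g * x * g⁻¹ ∈ pCoreOf ℓ K := by
    rintro g hg x ⟨y, hy, rfl⟩
    exact ⟨⟨g, hg⟩ * y * ⟨g, hg⟩⁻¹, pCore_normal.conj_mem y hy ⟨g, hg⟩, rfl⟩
  intro g hg
  rw [Subgroup.mem_normalizer_iff]
  intro x
  constructor
  · exact fun hx => key g hg x hx
  · intro hx
    have h := key g⁻¹ (inv_mem hg) _ hx
    simpa [mul_assoc] using h

lemma pCoreOf_isPGroup [Finite G] (hℓ : ℓ.Prime) (K : Subgroup G) :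
    IsPGroup ℓ (pCoreOf ℓ K) :=
  (pCore_isPGroup hℓ).map _

lemma le_pCoreOf {P K : Subgroup G} (h1 : P ≤ K) (h2 : K ≤ Subgroup.normalizer (P : Set G))
    (h3 : IsPGroup ℓ P) : P ≤ pCoreOf ℓ K := by
  have hN : (P.subgroupOf K).Normal := by
    constructor
    intro n hn g
    rw [Subgroup.mem_subgroupOf] at hn ⊢
    have h := Subgroup.mem_normalizer_iff.mp (h2 g.2) ↑n
    simpa using h.mp hn
  have hle : P.subgroupOf K ≤ pCore ℓ K := le_pCore hN (isPGroup_subgroupOf h3)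
  calc P = (P.subgroupOf K).map K.subtype := by
        rw [Subgroup.subgroupOf_map_subtype, inf_eq_left.mpr h1]
    _ ≤ pCoreOf ℓ K := Subgroup.map_mono hle

lemma map_pCoreOf {G' : Type} [Group G'] (f : G →* G') (hf : Function.Injective f)
    (L : Subgroup G) : (pCoreOf ℓ L).map f = pCoreOf ℓ (L.map f) := by
  have hcomp : ((L.map f).subtype).comp (L.equivMapOfInjective f hf).toMonoidHom
      = f.comp L.subtype := by
    ext x
    simp [Subgroup.coe_equivMapOfInjective_apply]
  rw [pCoreOf, pCoreOf, ← map_pCore (L.equivMapOfInjective f hf), Subgroup.map_map,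
    Subgroup.map_map, hcomp]

lemma map_conj_eq_of_mem_normalizer {K : Subgroup G} {g : G} (hg : g ∈ Subgroup.normalizer (K : Set G)) :
    K.map (MulAut.conj g).toMonoidHom = K := by
  ext x
  rw [Subgroup.mem_map_equiv, MulAut.conj_symm_apply]
  exact (Subgroup.mem_normalizer_iff''.mp hg x).symm

lemma mem_normalizer_of_map_conj_eq {K : Subgroup G} {g : G}
    (h : K.map (MulAut.conj g).toMonoidHom = K) : g ∈ Subgroup.normalizer (K : Set G) := by
  rw [Subgroup.mem_normalizer_iff]
  intro x
  constructor
  · intro hx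
    rw [← h]
    exact ⟨x, hx, rfl⟩
  · intro hx
    rw [← h] at hx
    obtain ⟨y, hy, hxy⟩ := hx
    have hxy' : g * y * g⁻¹ = g * x * g⁻¹ := hxy
    have : y = x := mul_left_cancel (mul_right_cancel hxy')
    rwa [← this]

lemma pCoreOf_eq_of_le_of_index [Finite G] (hℓ : ℓ.Prime) (hodd : Odd ℓ)
    {K N : Subgroup G} (hKN : K ≤ N) (hnorm : N ≤ Subgroup.normalizer (K : Set G))
    (hidx : K.relIndex N ∣ 2) : pCoreOf ℓ N = pCoreOf ℓ K := by
  have hKnN : (K.subgroupOf N).Normal := by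
    constructor
    intro n hn g
    rw [Subgroup.mem_subgroupOf] at hn ⊢
    have h := Subgroup.mem_normalizer_iff.mp (hnorm g.2) ↑n
    simpa using h.mp hn
  have hPle : pCoreOf ℓ N ≤ K := by
    have h1 : (pCoreOf ℓ N).subgroupOf N ≤ K.subgroupOf N :=
      pgroup_le_of_index hKnN hidx hodd (isPGroup_subgroupOf (pCoreOf_isPGroup hℓ N))
    have h2 := Subgroup.map_mono (f := N.subtype) h1
    rw [Subgroup.subgroupOf_map_subtype, Subgroup.subgroupOf_map_subtype,
      inf_eq_left.mpr (pCoreOf_le (ℓ := ℓ) N)] at h2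
    exact h2.trans inf_le_left
  apply le_antisymm
  · exact le_pCoreOf hPle (hKN.trans (le_normalizer_pCoreOf N)) (pCoreOf_isPGroup hℓ N)
  · refine le_pCoreOf ((pCoreOf_le K).trans hKN) ?_ (pCoreOf_isPGroup hℓ K)
    intro g hg
    apply mem_normalizer_of_map_conj_eq
    rw [map_pCoreOf _ (MulAut.conj g).injective, map_conj_eq_of_mem_normalizer (hnorm hg)]

lemma normalizer_subgroupOf {H R : Subgroup G} [hH : H.Normal] (hRH : R ≤ H) :
    Subgroup.normalizer ((R.subgroupOf H : Subgroup H) : Set H) = (Subgroup.normalizer (R : Set G)).subgroupOf H := by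
  ext g
  rw [Subgroup.mem_subgroupOf, Subgroup.mem_normalizer_iff, Subgroup.mem_normalizer_iff]
  constructor
  · intro hyp x
    by_cases hx : x ∈ H
    · have h := hyp ⟨x, hx⟩
      rw [Subgroup.mem_subgroupOf, Subgroup.mem_subgroupOf] at h
      simpa using h
    · constructor
      · intro hxR
        exact absurd (hRH hxR) hx
      · intro hxR
        have hxH : (g : G) * x * (g : G)⁻¹ ∈ H := hRH hxR
        have hx' : x ∈ H := by
          have h := hH.conj_mem _ hxH (g : G)⁻¹
          simpa [mul_assoc] using h
        exact absurd hx' hx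
  · intro hyp x
    rw [Subgroup.mem_subgroupOf, Subgroup.mem_subgroupOf]
    simpa using hyp ↑x

lemma le_normalizer_inf {N H : Subgroup G} [hH : H.Normal] : N ≤ Subgroup.normalizer ((N ⊓ H : Subgroup G) : Set G) := by
  intro g hg
  rw [Subgroup.mem_normalizer_iff]
  intro x
  simp only [Subgroup.mem_inf]
  constructor
  · rintro ⟨h1, h2⟩
    exact ⟨N.mul_mem (N.mul_mem hg h1) (N.inv_mem hg), hH.conj_mem x h2 g⟩
  · rintro ⟨h1, h2⟩
    refine ⟨?_, ?_⟩
    · have h := N.mul_mem (N.mul_mem (N.inv_mem hg) h1) hg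
      simpa [mul_assoc] using h
    · have h := hH.conj_mem _ h2 g⁻¹
      simpa [mul_assoc] using h

lemma mapped_core [Finite G] {H : Subgroup G} [H.Normal] (hH : H.index = 2)
    (hℓ : ℓ.Prime) (hodd : Odd ℓ) {R : Subgroup G} (hRH : R ≤ H) :
    (pCoreOf ℓ (Subgroup.normalizer ((R.subgroupOf H : Subgroup H) : Set H))).map H.subtype = pCoreOf ℓ (Subgroup.normalizer (R : Set G)) := by
  rw [map_pCoreOf H.subtype H.subtype_injective, normalizer_subgroupOf hRH,
    Subgroup.subgroupOf_map_subtype]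
  refine (pCoreOf_eq_of_le_of_index hℓ hodd inf_le_left le_normalizer_inf ?_).symm
  rw [Subgroup.inf_relIndex_left]
  rw [← hH]
  exact Subgroup.relIndex_dvd_index_of_normal H _

end Aux

theorem statement2 (G : Type) [Group G] [Finite G] (H : Subgroup G) [H.Normal]
    (hH : H.index = 2) (ℓ : ℕ) (hℓ : ℓ.Prime) (hℓodd : Odd ℓ) (R : Subgroup G) :
    IsRadicalSubgroup ℓ R ↔ R ≤ H ∧ IsRadicalSubgroup ℓ (R.subgroupOf H) := by
  have hR_map : ∀ (S : Subgroup G), S ≤ H → (S.subgroupOf H).map H.subtype = S := by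
    intro S hSH
    rw [Subgroup.subgroupOf_map_subtype, inf_eq_left.mpr hSH]
  constructor
  · intro hR
    have hRp : IsPGroup ℓ R := by
      rw [hR]
      exact pCoreOf_isPGroup hℓ _
    have hRH : R ≤ H := pgroup_le_of_index ‹H.Normal› (by rw [hH]) hℓodd hRp
    refine ⟨hRH, ?_⟩
    show R.subgroupOf H = pCoreOf ℓ (Subgroup.normalizer ((R.subgroupOf H : Subgroup H) : Set H))
    apply Subgroup.map_injective H.subtype_injective
    rw [hR_map R hRH, mapped_core hH hℓ hℓodd hRH]
    exact hR
  · rintro ⟨hRH, hrad⟩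
    have h' : R.subgroupOf H = pCoreOf ℓ (Subgroup.normalizer ((R.subgroupOf H : Subgroup H) : Set H)) := hrad
    have h2 := congrArg (Subgroup.map H.subtype) h'
    rw [hR_map R hRH, mapped_core hH hℓ hℓodd hRH] at h2
    exact h2
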